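/- Let (a;b) ∈ F_2^n × F_2^n and let w(a;b) denote the Hamming distance between a and b. Then the cardinality of the ball B_{(r,λ)}(a;b) = {(c;d) : d_λ((a;b),(c;d)) ≤ r} depends on (a;b) only through w(a;b); i.e., if w(a;b) = w(a';b') then |B_{(r,λ)}(a;b)| = |B_{(r,λ)}(a';b')|. -/

import Mathlib

open Finset

def ind (p : Prop) [Decidable p] : ℤ := if p then 1 else 0

def aldSym (lam : ℕ) (a b c d : Bool) : ℤ :=
  (1 + lam) * (ind (a = b) + ind (c = d))
    + lam * ind (a = !b ∧ !b = !c ∧ !c = d)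
    - 2 * (1 + lam) * ind (a = b ∧ b = c ∧ c = d)

def ALD (lam n : ℕ) (x y : (Fin n → Bool) × (Fin n → Bool)) : ℤ :=
  ∑ i, aldSym lam (x.1 i) (x.2 i) (y.1 i) (y.2 i)

def wt {n : ℕ} (a b : Fin n → Bool) : ℕ :=
  (Finset.univ.filter fun i => a i ≠ b i).card

lemma aldSym_xor (lam : ℕ) (s a b c d : Bool) :
    aldSym lam (xor a s) (xor b s) (xor c s) (xor d s) = aldSym lam a b c d := by
  cases s <;> cases a <;> cases b <;> cases c <;> cases d <;> simp [aldSym, ind]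

theorem ald_ball_card_depends_only_on_weight (lam n : ℕ) (hlam : 0 < lam) (r : ℤ)
    (x x' : (Fin n → Bool) × (Fin n → Bool))
    (hw : wt x.1 x.2 = wt x'.1 x'.2) :
    ((Finset.univ.filter fun y : (Fin n → Bool) × (Fin n → Bool) =>
        ALD lam n x y ≤ r)).card =
    ((Finset.univ.filter fun y : (Fin n → Bool) × (Fin n → Bool) =>
        ALD lam n x' y ≤ r)).card := by
  classical
  set p : Fin n → Prop := fun i => x.1 i ≠ x.2 i with hp
  set p' : Fin n → Prop := fun i => x'.1 i ≠ x'.2 i with hp'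
  have hD : Fintype.card {i // p i} = Fintype.card {i // p' i} := by
    simpa [p, p', Fintype.card_subtype, wt] using hw
  have hC : Fintype.card {i // ¬ p i} = Fintype.card {i // ¬ p' i} := by
    have h1 := Fintype.card_subtype_compl p
    have h2 := Fintype.card_subtype_compl p'
    omega
  let eD : {i // p i} ≃ {i // p' i} := Fintype.equivOfCardEq hD
  let eC : {i // ¬ p i} ≃ {i // ¬ p' i} := Fintype.equivOfCardEq hC
  let e : Fin n ≃ Fin n :=
    (Equiv.sumCompl p).symm.trans ((eD.sumCongr eC).trans (Equiv.sumCompl p'))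
  have he : ∀ i, p i ↔ p' (e i) := by
    intro i
    by_cases h : p i
    · simp only [e, Equiv.trans_apply, Equiv.sumCompl_symm_apply_of_pos h,
        Equiv.sumCongr_apply, Sum.map_inl, Equiv.sumCompl_apply_inl]
      exact iff_of_true h (eD ⟨i, h⟩).2
    · simp only [e, Equiv.trans_apply, Equiv.sumCompl_symm_apply_of_neg h,
        Equiv.sumCongr_apply, Sum.map_inr, Equiv.sumCompl_apply_inr]
      exact iff_of_false h (eC ⟨i, h⟩).2
  set s : Fin n → Bool := fun i => xor (x.1 i) (x'.1 (e i)) with hs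
  have h2 : ∀ i, x'.2 (e i) = xor (x.2 i) (s i) := by
    intro i
    have := he i
    simp only [p, p', hs] at this ⊢
    cases hx1 : x.1 i <;> cases hx2 : x.2 i <;> cases hx1' : x'.1 (e i) <;>
      cases hx2' : x'.2 (e i) <;> simp_all
  have h1 : ∀ i, x'.1 (e i) = xor (x.1 i) (s i) := by
    intro i; cases hx : x.1 i <;> simp [hs, hx]
  let F : (Fin n → Bool) × (Fin n → Bool) → (Fin n → Bool) × (Fin n → Bool) :=
    fun y => (fun j => xor (y.1 (e.symm j)) (s (e.symm j)),
              fun j => xor (y.2 (e.symm j)) (s (e.symm j)))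
  let G : (Fin n → Bool) × (Fin n → Bool) → (Fin n → Bool) × (Fin n → Bool) :=
    fun y => (fun i => xor (y.1 (e i)) (s i), fun i => xor (y.2 (e i)) (s i))
  have hALD : ∀ y, ALD lam n x' (F y) = ALD lam n x y := by
    intro y
    unfold ALD
    rw [← Equiv.sum_comp e (fun j => aldSym lam (x'.1 j) (x'.2 j) ((F y).1 j) ((F y).2 j))]
    refine Finset.sum_congr rfl fun i _ => ?_
    simp only [F, Equiv.symm_apply_apply, h1 i, h2 i]
    exact aldSym_xor lam (s i) (x.1 i) (x.2 i) (y.1 i) (y.2 i)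
  refine Finset.card_bij' (fun y _ => F y) (fun y _ => G y) ?_ ?_ ?_ ?_
  · intro y hy
    simp only [Finset.mem_filter, Finset.mem_univ, true_and] at hy ⊢
    rw [hALD y]; exact hy
  · intro y hy
    simp only [Finset.mem_filter, Finset.mem_univ, true_and] at hy ⊢
    have : F (G y) = y := by
      ext j <;> simp [F, G]
    rw [← this] at hy
    rwa [hALD (G y)] at hy
  · intro y _
    ext i <;> simp [F, G]
  · intro y _
    ext j <;> simp [F, G]
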